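/- Pontryagin duality gives a one-to-one correspondence between linear subshifts V ⊆ (Γ → 𝔽₂)^r (for varying r) and finitely generated left 𝔽₂[Γ]-modules: the annihilator construction V ↦ (𝔽₂[Γ])^r / V^⊥ sends linear subshifts to finitely generated modules, isomorphic subshifts correspond to isomorphic modules, and every finitely generated left 𝔽₂[Γ]-module arises this way. -/

import Mathlib

open Filter Topology Pointwise

instance : TopologicalSpace (ZMod 2) := ⊥
instance : DiscreteTopology (ZMod 2) := ⟨rfl⟩

variable {G : Type*} [Group G] [DecidableEq G]

/-- Left translation action on functions. -/
def ltv (M : Type*) (γ : G) (f : G → M) : G → M := fun δ => f (γ⁻¹ * δ)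

/-- A `Γ`-invariant linear subspace. -/
def InvariantSub (M : Type*) [AddCommGroup M] [Module (ZMod 2) M]
    (W : Submodule (ZMod 2) (G → M)) : Prop :=
  ∀ γ : G, ∀ f ∈ W, ltv M γ f ∈ W

/-- The space of restrictions of elements of `W` to `Λ`. -/
noncomputable def resSpace {M : Type*} [AddCommGroup M] [Module (ZMod 2) M]
    (W : Submodule (ZMod 2) (G → M)) (Λ : Finset G) :
    Submodule (ZMod 2) (↥Λ → M) :=
  W.map (LinearMap.funLeft (ZMod 2) M (Subtype.val : ↥Λ → G))

/-- The entropy of a `Γ`-invariant linear subspace, along a Følner exhaustion. -/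
noncomputable def entropy {M : Type*} [AddCommGroup M] [Module (ZMod 2) M]
    (F : ℕ → Finset G) (W : Submodule (ZMod 2) (G → M)) : ℝ :=
  Filter.limsup
    (fun n => (Module.finrank (ZMod 2) ↥(resSpace W (F n)) : ℝ) / (F n).card) atTop

/-- `S` is a finite symmetric generating set containing `1`. -/
def SymmGen (S : Finset G) : Prop :=
  (1 : G) ∈ S ∧ (∀ s ∈ S, s⁻¹ ∈ S) ∧ Subgroup.closure (S : Set G) = ⊤

/-- A Følner exhaustion with respect to the word metric of `S`:
`S ^ r * F n` is the `r`-neighbourhood of `F n`. -/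
structure FolnerSeq (S : Finset G) (F : ℕ → Finset G) : Prop where
  one_mem : (1 : G) ∈ F 0
  mono : Monotone F
  exhaust : ∀ g : G, ∃ n, g ∈ F n
  folner : ∀ r : ℕ,
    Tendsto (fun n => (((S ^ r * F n) \ F n).card : ℝ) / (F n).card) atTop (𝓝 0)

/-- The duality pairing `⟨χ, f⟩ = Σ_i Σ_γ χ_i(γ) f_i(γ)` between
`(𝔽₂[Γ])^r` and `(Γ → 𝔽₂)^r`. -/
noncomputable def dualPair {r : ℕ} (χ : Fin r → MonoidAlgebra (ZMod 2) G)
    (f : G → Fin r → ZMod 2) : ZMod 2 :=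
  ∑ i, Finsupp.sum (χ i).coeff (fun γ c => c * f γ i)

/-- The annihilator `V^⊥ ⊆ (𝔽₂[Γ])^r` of a set `V ⊆ (Γ → 𝔽₂)^r`. -/
def perpSet {r : ℕ} (V : Set (G → Fin r → ZMod 2)) :
    Set (Fin r → MonoidAlgebra (ZMod 2) G) :=
  {χ | ∀ f ∈ V, dualPair χ f = 0}

set_option linter.unusedSectionVars false in
set_option linter.unusedSectionVars false
section Aux
variable {r : ℕ}

/-- `dualPair` as an additive hom in `χ`. -/
noncomputable def dPl (f : G → Fin r → ZMod 2) :
    (Fin r → MonoidAlgebra (ZMod 2) G) →+ ZMod 2 where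
  toFun χ := dualPair χ f
  map_zero' := by simp [dualPair]
  map_add' χ₁ χ₂ := by
    simp only [dualPair, Pi.add_apply, MonoidAlgebra.coeff_add]
    rw [← Finset.sum_add_distrib]
    refine Finset.sum_congr rfl fun i _ => ?_
    exact Finsupp.sum_add_index' (fun γ => by simp) (fun γ b₁ b₂ => add_mul _ _ _)

private lemma dualPair_add_left (χ₁ χ₂ : Fin r → MonoidAlgebra (ZMod 2) G) (f) :
    dualPair (χ₁ + χ₂) f = dualPair χ₁ f + dualPair χ₂ f := (dPl f).map_add χ₁ χ₂

private lemma dualPair_sub_left (χ₁ χ₂ : Fin r → MonoidAlgebra (ZMod 2) G) (f) :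
    dualPair (χ₁ - χ₂) f = dualPair χ₁ f - dualPair χ₂ f := (dPl f).map_sub χ₁ χ₂

private lemma dualPair_zmod_smul_left (a : ZMod 2) (χ : Fin r → MonoidAlgebra (ZMod 2) G) (f) :
    dualPair (a • χ) f = a * dualPair χ f :=
  ((dPl f).toZModLinearMap 2).map_smul a χ

/-- `dualPair` as an additive hom in `f`. -/
noncomputable def dPr (χ : Fin r → MonoidAlgebra (ZMod 2) G) :
    (G → Fin r → ZMod 2) →+ ZMod 2 where
  toFun f := dualPair χ f
  map_zero' := by simp [dualPair]
  map_add' f g := by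
    simp only [dualPair, Pi.add_apply]
    rw [← Finset.sum_add_distrib]
    refine Finset.sum_congr rfl fun i _ => ?_
    rw [← Finsupp.sum_add]
    exact Finsupp.sum_congr fun γ _ => mul_add _ _ _

private lemma dualPair_add_right (χ : Fin r → MonoidAlgebra (ZMod 2) G) (f g) :
    dualPair χ (f + g) = dualPair χ f + dualPair χ g := (dPr χ).map_add f g

private lemma dualPair_zmod_smul_right (a : ZMod 2) (χ : Fin r → MonoidAlgebra (ZMod 2) G) (f) :
    dualPair χ (a • f) = a * dualPair χ f :=
  ((dPr χ).toZModLinearMap 2).map_smul a f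

private lemma continuous_dualPair (χ : Fin r → MonoidAlgebra (ZMod 2) G) :
    Continuous fun f : G → Fin r → ZMod 2 => dualPair χ f := by
  refine continuous_finset_sum _ fun i _ => ?_
  refine continuous_finset_sum _ fun γ _ => ?_
  exact (continuous_of_discreteTopology (f := fun x : ZMod 2 => (χ i).coeff γ * x)).comp
    ((continuous_apply i).comp (continuous_apply γ))

private lemma dualPair_single_smul (γ : G) (χ : Fin r → MonoidAlgebra (ZMod 2) G) (f) :
    dualPair (MonoidAlgebra.single γ (1 : ZMod 2) • χ) f
      = dualPair χ (ltv (Fin r → ZMod 2) γ⁻¹ f) := by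
  refine Finset.sum_congr rfl fun i _ => ?_
  have h1 : ((MonoidAlgebra.single γ (1 : ZMod 2) • χ) i).coeff
      = Finsupp.mapDomain (fun δ => γ * δ) (χ i).coeff := by
    ext y
    rw [Pi.smul_apply, smul_eq_mul, MonoidAlgebra.single_mul_apply, one_mul]
    have : y = γ * (γ⁻¹ * y) := by group
    rw [this, Finsupp.mapDomain_apply (mul_right_injective γ)]
    congr 1; group
  rw [h1, Finsupp.sum_mapDomain_index (h := fun δ c => c * f δ i)
    (fun δ => zero_mul _) (fun δ b₁ b₂ => add_mul _ _ _)]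
  refine Finsupp.sum_congr fun δ _ => ?_
  simp [ltv]

private lemma dualPair_smul_left (c : MonoidAlgebra (ZMod 2) G)
    (χ : Fin r → MonoidAlgebra (ZMod 2) G) (f) :
    dualPair (c • χ) f
      = Finsupp.sum c.coeff (fun γ a => a * dualPair χ (ltv (Fin r → ZMod 2) γ⁻¹ f)) := by
  induction c using MonoidAlgebra.induction with
  | zero => simp [dualPair]
  | single_add γ a c hγ ha ih =>
    rw [add_smul, dualPair_add_left, ih, MonoidAlgebra.coeff_add,
      Finsupp.sum_add_index'
        (h := fun δ a => a * dualPair χ (ltv (Fin r → ZMod 2) δ⁻¹ f))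
        (fun δ => zero_mul _) (fun δ b₁ b₂ => add_mul _ _ _),
      MonoidAlgebra.coeff_single, Finsupp.sum_single_index
        (h := fun δ a => a * dualPair χ (ltv (Fin r → ZMod 2) δ⁻¹ f)) (zero_mul _)]
    congr 1
    have : (MonoidAlgebra.single γ a : MonoidAlgebra (ZMod 2) G)
        = a • MonoidAlgebra.single γ (1 : ZMod 2) := by
      rw [MonoidAlgebra.smul_single, smul_eq_mul, mul_one]
    rw [this, smul_assoc, dualPair_zmod_smul_left, dualPair_single_smul]

end Aux

set_option linter.unusedSectionVars false
section Aux2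
variable {r : ℕ}

/-- Representation: a `χ` built from a functional `Ψ` on `↥Λ → Fin r → ZMod 2`
pairs with `f` as `Ψ` applied to the restriction of `f`. -/
private lemma dualPair_of_functional (Λ : Finset G)
    (Ψ : (↥Λ → Fin r → ZMod 2) →ₗ[ZMod 2] ZMod 2) (f : G → Fin r → ZMod 2) :
    dualPair (fun i => ∑ γ ∈ Λ, MonoidAlgebra.single γ
        (Ψ (fun δ j => if (δ : G) = γ ∧ j = i then 1 else 0))) f
      = Ψ (fun δ => f δ) := by
  classical
  have key : ∀ i : Fin r,
      (Finsupp.sum (∑ γ ∈ Λ, MonoidAlgebra.single γ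
          (Ψ (fun δ j => if (δ : G) = γ ∧ j = i then 1 else 0))).coeff
        (fun γ c => c * f γ i))
      = ∑ γ ∈ Λ, Ψ (fun δ j => if (δ : G) = γ ∧ j = i then 1 else 0) * f γ i := by
    intro i
    rw [MonoidAlgebra.coeff_sum, ← Finsupp.sum_finset_sum_index (h := fun γ c => c * f γ i)
      (fun γ => zero_mul _) (fun γ b₁ b₂ => add_mul _ _ _)]
    refine Finset.sum_congr rfl fun γ _ => ?_
    exact Finsupp.sum_single_index (h := fun γ c => c * f γ i) (zero_mul _)
  simp only [dualPair, key]
  have : ∀ i γ, Ψ (fun δ j => if (δ : G) = γ ∧ j = i then 1 else 0) * f γ i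
      = Ψ (f γ i • fun (δ : ↥Λ) (j : Fin r) => if (δ : G) = γ ∧ j = i then (1:ZMod 2) else 0) := by
    intro i γ
    rw [map_smul, smul_eq_mul, mul_comm]
  simp only [this, ← map_sum]
  congr 1
  funext δ j
  simp only [Finset.sum_apply, Pi.smul_apply, smul_eq_mul, mul_ite, mul_one, mul_zero]
  rw [Finset.sum_comm]
  rw [Finset.sum_eq_single (δ : G)]
  · simp
  · intro γ _ hγ
    apply Finset.sum_eq_zero
    intro i _
    simp [Ne.symm hγ]
  · intro h; exact absurd δ.2 h

/-- Every continuous linear functional on a closed subspace of `(Γ → 𝔽₂^r)`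
is represented by a finitely supported `χ`. -/
private lemma exists_dualPair_rep (V : Submodule (ZMod 2) (G → Fin r → ZMod 2))
    (hV : IsClosed (V : Set (G → Fin r → ZMod 2)))
    (φ : ↥V →ₗ[ZMod 2] ZMod 2) (hφ : Continuous φ) :
    ∃ χ : Fin r → MonoidAlgebra (ZMod 2) G, ∀ v : ↥V, dualPair χ ↑v = φ v := by
  classical
  -- find a finite set Λ such that φ vanishes on sections vanishing on Λ
  have h0 : φ ⁻¹' {0} ∈ 𝓝 (0 : ↥V) := by
    refine (isOpen_discrete ({0} : Set (ZMod 2))).preimage hφ |>.mem_nhds ?_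
    simp
  rw [nhds_induced (Subtype.val : ↥V → G → Fin r → ZMod 2)] at h0
  obtain ⟨s, hs, hsub⟩ := h0
  rw [show ((0 : ↥V) : G → Fin r → ZMod 2) = 0 from rfl, nhds_pi, Filter.mem_pi] at hs
  obtain ⟨I, hIfin, t, ht, hts⟩ := hs
  set Λ : Finset G := hIfin.toFinset with hΛ
  have hvanish : ∀ v : ↥V, (∀ γ ∈ Λ, (v : G → Fin r → ZMod 2) γ = 0) → φ v = 0 := by
    intro v hv
    have : (v : G → Fin r → ZMod 2) ∈ I.pi t := by
      intro γ hγ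
      have := hv γ (hIfin.mem_toFinset.2 hγ)
      rw [this]
      exact mem_of_mem_nhds (ht γ)
    exact hsub (hts this)
  -- factor through the restriction to Λ
  set ρ : (G → Fin r → ZMod 2) →ₗ[ZMod 2] (↥Λ → Fin r → ZMod 2) :=
    LinearMap.funLeft (ZMod 2) _ (Subtype.val : ↥Λ → G) with hρ
  set ρV : ↥V →ₗ[ZMod 2] (↥Λ → Fin r → ZMod 2) := ρ.comp V.subtype with hρV
  have hker : LinearMap.ker ρV ≤ LinearMap.ker φ := by
    intro v hv
    rw [LinearMap.mem_ker] at hv ⊢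
    refine hvanish v fun γ hγ => ?_
    exact congrFun hv ⟨γ, hγ⟩
  set ψ : ↥(LinearMap.range ρV) →ₗ[ZMod 2] ZMod 2 :=
    ((LinearMap.ker ρV).liftQ φ hker).comp (ρV.quotKerEquivRange.symm : _ →ₗ[ZMod 2] _)
    with hψ
  obtain ⟨Ψ, hΨ⟩ := LinearMap.exists_extend ψ
  refine ⟨fun i => ∑ γ ∈ Λ, MonoidAlgebra.single γ
      (Ψ (fun δ j => if (δ : G) = γ ∧ j = i then 1 else 0)), fun v => ?_⟩
  rw [dualPair_of_functional Λ Ψ]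
  have h1 : (fun δ : ↥Λ => (v : G → Fin r → ZMod 2) δ) = ρV v := rfl
  rw [h1]
  have h2 : Ψ (ρV v) = ψ ⟨ρV v, LinearMap.mem_range_self ρV v⟩ := by
    have := LinearMap.congr_fun hΨ ⟨ρV v, LinearMap.mem_range_self ρV v⟩
    simpa using this
  rw [h2, hψ]
  simp only [LinearMap.coe_comp, Function.comp_apply, LinearEquiv.coe_coe]
  have h3 : (⟨ρV v, LinearMap.mem_range_self ρV v⟩ : ↥(LinearMap.range ρV))
      = ρV.quotKerEquivRange (Submodule.Quotient.mk v) := by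
    ext
    simp [LinearMap.quotKerEquivRange_apply_mk]
  rw [h3, LinearEquiv.symm_apply_apply, Submodule.liftQ_apply]

end Aux2

set_option linter.unusedSectionVars false
section Aux3
variable {r : ℕ}

/-- The subshift annihilating a module `N`. -/
def perpMod (N : Submodule (MonoidAlgebra (ZMod 2) G) (Fin r → MonoidAlgebra (ZMod 2) G)) :
    Submodule (ZMod 2) (G → Fin r → ZMod 2) where
  carrier := {f | ∀ χ ∈ N, dualPair χ f = 0}
  zero_mem' := fun χ _ => (dPr χ).map_zero
  add_mem' := fun hf hg χ hχ => by
    rw [dualPair_add_right, hf χ hχ, hg χ hχ, add_zero]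
  smul_mem' := fun a f hf χ hχ => by
    rw [dualPair_zmod_smul_right, hf χ hχ, mul_zero]

private lemma perpMod_mem {N} {f : G → Fin r → ZMod 2} :
    f ∈ perpMod N ↔ ∀ χ ∈ N, dualPair χ f = 0 := Iff.rfl

private lemma perpMod_isClosed (N : Submodule (MonoidAlgebra (ZMod 2) G)
    (Fin r → MonoidAlgebra (ZMod 2) G)) :
    IsClosed ((perpMod N : Submodule (ZMod 2) (G → Fin r → ZMod 2)) :
      Set (G → Fin r → ZMod 2)) := by
  have : ((perpMod N : Submodule (ZMod 2) (G → Fin r → ZMod 2)) :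
      Set (G → Fin r → ZMod 2)) = ⋂ χ ∈ N, {f | dualPair χ f = 0} := by
    ext f; simp [perpMod_mem, Set.mem_iInter]
  rw [this]
  exact isClosed_biInter fun χ _ =>
    isClosed_eq (continuous_dualPair χ) continuous_const

private lemma perpMod_invariant (N : Submodule (MonoidAlgebra (ZMod 2) G)
    (Fin r → MonoidAlgebra (ZMod 2) G)) :
    InvariantSub (Fin r → ZMod 2) (perpMod N) := by
  intro γ f hf χ hχ
  have h := dualPair_single_smul γ⁻¹ χ f
  rw [inv_inv] at h
  rw [← h]
  exact hf _ (N.smul_mem _ hχ)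

/-- Any `ZMod 2`-functional on `(𝔽₂[Γ])^r` is represented by pairing with some `f₀`. -/
private lemma dualPair_eq_functional (φ : (Fin r → MonoidAlgebra (ZMod 2) G) →ₗ[ZMod 2] ZMod 2)
    (ξ : Fin r → MonoidAlgebra (ZMod 2) G) :
    dualPair ξ (fun γ i => φ (Pi.single i (MonoidAlgebra.single γ (1 : ZMod 2)))) = φ ξ := by
  have step : ∀ i : Fin r,
      (Finsupp.sum (ξ i).coeff fun γ c => c * φ (Pi.single i (MonoidAlgebra.single γ (1 : ZMod 2))))
        = φ (Pi.single i (ξ i)) := by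
    intro i
    set ν : MonoidAlgebra (ZMod 2) G →ₗ[ZMod 2] ZMod 2 :=
      φ.comp (LinearMap.single (ZMod 2) (fun _ : Fin r => MonoidAlgebra (ZMod 2) G) i)
      with hν
    have h1 : ∀ γ c, c * φ (Pi.single i (MonoidAlgebra.single γ (1 : ZMod 2)))
        = ν (MonoidAlgebra.single γ c) := by
      intro γ c
      have : (MonoidAlgebra.single γ c : MonoidAlgebra (ZMod 2) G)
          = c • MonoidAlgebra.single γ (1 : ZMod 2) := by
        rw [MonoidAlgebra.smul_single, smul_eq_mul, mul_one]
      rw [hν, this, map_smul, smul_eq_mul]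
      rfl
    calc (Finsupp.sum (ξ i).coeff fun γ c => c * φ (Pi.single i (MonoidAlgebra.single γ (1 : ZMod 2))))
        = Finsupp.sum (ξ i).coeff fun γ c => ν (MonoidAlgebra.single γ c) :=
          Finsupp.sum_congr fun γ _ => h1 γ _
      _ = ν ((ξ i).coeff.sum fun γ c => MonoidAlgebra.single γ c) := (map_finsuppSum ν _ _).symm
      _ = ν (ξ i) := by rw [MonoidAlgebra.sum_coeff_single]
      _ = φ (Pi.single i (ξ i)) := rfl
  simp only [dualPair, step, ← map_sum]
  congr 1
  exact Finset.univ_sum_single ξ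

/-- Biduality: the annihilator of the subshift annihilating `N` is `N` itself. -/
private lemma perpSet_perpMod (N : Submodule (MonoidAlgebra (ZMod 2) G)
    (Fin r → MonoidAlgebra (ZMod 2) G)) :
    perpSet ((perpMod N : Submodule (ZMod 2) (G → Fin r → ZMod 2)) :
      Set (G → Fin r → ZMod 2)) = ↑N := by
  ext χ
  constructor
  · intro hχ
    by_contra hχN
    have hχN₂ : χ ∉ N.restrictScalars (ZMod 2) := hχN
    rcases (LinearPMap.supSpanSingleton ⟨N.restrictScalars (ZMod 2), 0⟩ χ (1 : ZMod 2)
      hχN₂).toFun.exists_extend with ⟨φ, hφ⟩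
    have hφN : ∀ x ∈ N, φ x = 0 := by
      intro x hx
      have := LinearPMap.supSpanSingleton_apply_mk
        (⟨N.restrictScalars (ZMod 2), 0⟩ : (Fin r → MonoidAlgebra (ZMod 2) G) →ₗ.[ZMod 2] ZMod 2) χ
        (1 : ZMod 2) hχN₂ x hx 0
      have h : φ (x + (0 : ZMod 2) • χ) = _ := (LinearMap.congr_fun hφ _).trans this
      simpa using h
    have hφχ : φ χ = 1 := by
      have := LinearPMap.supSpanSingleton_apply_mk
        (⟨N.restrictScalars (ZMod 2), 0⟩ : (Fin r → MonoidAlgebra (ZMod 2) G) →ₗ.[ZMod 2] ZMod 2) χ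
        (1 : ZMod 2) hχN₂ 0 (Submodule.zero_mem _) 1
      have h : φ (0 + (1 : ZMod 2) • χ) = _ := (LinearMap.congr_fun hφ _).trans this
      simpa using h
    set f₀ : G → Fin r → ZMod 2 :=
      fun γ i => φ (Pi.single i (MonoidAlgebra.single γ (1 : ZMod 2))) with hf₀
    have hf₀V : f₀ ∈ perpMod N := by
      intro ξ hξ
      rw [hf₀, dualPair_eq_functional]
      exact hφN ξ hξ
    have : dualPair χ f₀ = 0 := hχ f₀ hf₀V
    rw [hf₀, dualPair_eq_functional, hφχ] at this
    exact one_ne_zero this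
  · intro hχ f hf
    exact hf χ hχ

end Aux3

set_option linter.unusedSectionVars false
section Aux4
variable {r s : ℕ}

/-- The linear functional `w ↦ dualPair χ (g w)` for a linear `g`. -/
noncomputable def pairAlong {r s : ℕ} (χ : Fin r → MonoidAlgebra (ZMod 2) G)
    (W : Submodule (ZMod 2) (G → Fin s → ZMod 2))
    (g : ↥W →ₗ[ZMod 2] (G → Fin r → ZMod 2)) : ↥W →ₗ[ZMod 2] ZMod 2 :=
  ((dPr χ).toZModLinearMap 2).comp g

private lemma part2_aux (V : Submodule (ZMod 2) (G → Fin r → ZMod 2))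
    (W : Submodule (ZMod 2) (G → Fin s → ZMod 2))
    (hVc : IsClosed (V : Set (G → Fin r → ZMod 2)))
    (hVi : InvariantSub (Fin r → ZMod 2) V)
    (hWc : IsClosed (W : Set (G → Fin s → ZMod 2)))
    (hWi : InvariantSub (Fin s → ZMod 2) W)
    (e : ↥V ≃ₗ[ZMod 2] ↥W) (he : Continuous e) (hes : Continuous e.symm)
    (heq : ∀ γ : G, ∀ v : ↥V,
      (↑(e ⟨ltv _ γ ↑v, hVi γ ↑v v.2⟩) : G → Fin s → ZMod 2) = ltv _ γ ↑(e v))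
    (N : Submodule (MonoidAlgebra (ZMod 2) G) (Fin r → MonoidAlgebra (ZMod 2) G))
    (N' : Submodule (MonoidAlgebra (ZMod 2) G) (Fin s → MonoidAlgebra (ZMod 2) G))
    (hN : (N : Set _) = perpSet (V : Set (G → Fin r → ZMod 2)))
    (hN' : (N' : Set _) = perpSet (W : Set (G → Fin s → ZMod 2))) :
    Nonempty
      (((Fin r → MonoidAlgebra (ZMod 2) G) ⧸ N) ≃ₗ[MonoidAlgebra (ZMod 2) G]
       ((Fin s → MonoidAlgebra (ZMod 2) G) ⧸ N')) := by
  classical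
  -- equivariance of `e.symm`
  have heqs : ∀ γ : G, ∀ w : ↥W,
      (↑(e.symm ⟨ltv _ γ ↑w, hWi γ ↑w w.2⟩) : G → Fin r → ZMod 2)
        = ltv _ γ ↑(e.symm w) := by
    intro γ w
    have h2 : e ⟨ltv _ γ ↑(e.symm w), hVi γ _ (e.symm w).2⟩
        = ⟨ltv _ γ ↑w, hWi γ ↑w w.2⟩ := by
      apply Subtype.ext
      rw [heq γ (e.symm w), e.apply_symm_apply]
    have h3 := congrArg e.symm h2
    rw [e.symm_apply_apply] at h3
    rw [← h3]
  -- membership in N / N' via the pairing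
  have hmemN : ∀ χ, χ ∈ N ↔ ∀ f ∈ V, dualPair χ f = 0 := by
    intro χ
    rw [← SetLike.mem_coe, hN]
    exact ⟨fun h f hf => h f hf, fun h f hf => h f hf⟩
  have hmemN' : ∀ χ', χ' ∈ N' ↔ ∀ f ∈ W, dualPair χ' f = 0 := by
    intro χ'
    rw [← SetLike.mem_coe, hN']
    exact ⟨fun h f hf => h f hf, fun h f hf => h f hf⟩
  -- the compatibility relation
  set Compat : (Fin r → MonoidAlgebra (ZMod 2) G) →
      (Fin s → MonoidAlgebra (ZMod 2) G) → Prop :=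
    fun χ χ' => ∀ w : ↥W, dualPair χ' ↑w = dualPair χ ↑(e.symm w) with hC
  have hex : ∀ χ, ∃ χ', Compat χ χ' := by
    intro χ
    have hcont : Continuous (pairAlong χ W (V.subtype.comp (e.symm : ↥W →ₗ[ZMod 2] ↥V))) := by
      exact (continuous_dualPair χ).comp (continuous_subtype_val.comp hes)
    obtain ⟨χ', hχ'⟩ := exists_dualPair_rep W hWc _ hcont
    exact ⟨χ', fun w => hχ' w⟩
  choose c hc using hex
  have hdiff : ∀ χ χ'₁ χ'₂, Compat χ χ'₁ → Compat χ χ'₂ → χ'₁ - χ'₂ ∈ N' := by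
    intro χ χ'₁ χ'₂ h1 h2
    rw [hmemN']
    intro f hf
    rw [dualPair_sub_left, h1 ⟨f, hf⟩, h2 ⟨f, hf⟩, sub_self]
  -- smul compatibility
  have hsmul : ∀ (a : MonoidAlgebra (ZMod 2) G) χ χ', Compat χ χ' →
      Compat (a • χ) (a • χ') := by
    intro a χ χ' h w
    rw [dualPair_smul_left, dualPair_smul_left]
    refine Finsupp.sum_congr fun γ _ => ?_
    congr 1
    have hw : ltv (Fin s → ZMod 2) γ⁻¹ ↑w ∈ W := hWi γ⁻¹ ↑w w.2
    have := h ⟨ltv (Fin s → ZMod 2) γ⁻¹ ↑w, hw⟩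
    rw [this, heqs γ⁻¹ w]
  -- the induced map
  set T : (Fin r → MonoidAlgebra (ZMod 2) G) →ₗ[MonoidAlgebra (ZMod 2) G]
      ((Fin s → MonoidAlgebra (ZMod 2) G) ⧸ N') :=
    { toFun := fun χ => Submodule.Quotient.mk (c χ)
      map_add' := by
        intro χ₁ χ₂
        rw [← Submodule.Quotient.mk_add, Submodule.Quotient.eq]
        refine hdiff (χ₁ + χ₂) _ _ (hc _) ?_
        intro w
        rw [dualPair_add_left, dualPair_add_left, hc χ₁ w, hc χ₂ w]
      map_smul' := by
        intro a χ
        rw [RingHom.id_apply, ← Submodule.Quotient.mk_smul, Submodule.Quotient.eq]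
        exact hdiff (a • χ) _ _ (hc _) (hsmul a χ (c χ) (hc χ)) } with hT
  have hker : LinearMap.ker T = N := by
    ext χ
    rw [LinearMap.mem_ker, hT]
    simp only [LinearMap.coe_mk, AddHom.coe_mk]
    rw [Submodule.Quotient.mk_eq_zero, hmemN', hmemN]
    constructor
    · intro h f hf
      have hsurj : (⟨f, hf⟩ : ↥V) = e.symm (e ⟨f, hf⟩) := (e.symm_apply_apply _).symm
      have := (hc χ (e ⟨f, hf⟩)).symm.trans (h _ (e ⟨f, hf⟩).2)
      rw [← hsurj] at this
      exact this
    · intro h f hf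
      rw [hc χ ⟨f, hf⟩]
      exact h _ (e.symm ⟨f, hf⟩).2
  have hsurj : Function.Surjective T := by
    intro y
    obtain ⟨χ', rfl⟩ := Submodule.Quotient.mk_surjective N' y
    have hcont : Continuous (pairAlong χ' V (W.subtype.comp (e : ↥V →ₗ[ZMod 2] ↥W))) := by
      exact (continuous_dualPair χ').comp (continuous_subtype_val.comp he)
    obtain ⟨χ, hχ⟩ := exists_dualPair_rep V hVc _ hcont
    refine ⟨χ, ?_⟩
    rw [hT]
    simp only [LinearMap.coe_mk, AddHom.coe_mk]
    rw [Submodule.Quotient.eq]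
    refine hdiff χ _ _ (hc χ) ?_
    intro w
    have h2 : (pairAlong χ' V (W.subtype.comp (e : ↥V →ₗ[ZMod 2] ↥W))) (e.symm w)
        = dualPair χ' ↑w := by
      show dualPair χ' ↑(e (e.symm w)) = dualPair χ' ↑w
      rw [e.apply_symm_apply]
    have := hχ (e.symm w)
    rw [h2] at this
    exact this.symm
  exact ⟨(Submodule.quotEquivOfEq N (LinearMap.ker T) hker.symm).trans
    (T.quotKerEquivOfSurjective hsurj)⟩

end Aux4

/-- Pontryagin duality gives a one-to-one correspondence between linear
subshifts `V ⊆ (Γ → 𝔽₂)^r` and finitely generated left `𝔽₂[Γ]`-modules, via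
`V ↦ (𝔽₂[Γ])^r / V^⊥`: the resulting module is finitely generated; isomorphic subshifts
give isomorphic modules; and every finitely generated left `𝔽₂[Γ]`-module arises. -/
theorem pontryagin_correspondence :
    -- (1) the module attached to a linear subshift is finitely generated
    (∀ (r : ℕ) (V : Submodule (ZMod 2) (G → Fin r → ZMod 2)),
      IsClosed (V : Set (G → Fin r → ZMod 2)) → InvariantSub (Fin r → ZMod 2) V →
      ∀ N : Submodule (MonoidAlgebra (ZMod 2) G) (Fin r → MonoidAlgebra (ZMod 2) G),
        (N : Set (Fin r → MonoidAlgebra (ZMod 2) G)) = perpSet (V : Set (G → Fin r → ZMod 2)) →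
        Module.Finite (MonoidAlgebra (ZMod 2) G)
          ((Fin r → MonoidAlgebra (ZMod 2) G) ⧸ N)) ∧
    -- (2) isomorphic subshifts give isomorphic modules
    (∀ (r s : ℕ) (V : Submodule (ZMod 2) (G → Fin r → ZMod 2))
        (W : Submodule (ZMod 2) (G → Fin s → ZMod 2)),
      IsClosed (V : Set (G → Fin r → ZMod 2)) →
      ∀ hVi : InvariantSub (Fin r → ZMod 2) V,
      IsClosed (W : Set (G → Fin s → ZMod 2)) → InvariantSub (Fin s → ZMod 2) W →
      ∀ e : ↥V ≃ₗ[ZMod 2] ↥W, Continuous e → Continuous e.symm →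
      (∀ γ : G, ∀ v : ↥V,
        (↑(e ⟨ltv _ γ ↑v, hVi γ ↑v v.2⟩) : G → Fin s → ZMod 2) = ltv _ γ ↑(e v)) →
      ∀ (N : Submodule (MonoidAlgebra (ZMod 2) G) (Fin r → MonoidAlgebra (ZMod 2) G))
        (N' : Submodule (MonoidAlgebra (ZMod 2) G) (Fin s → MonoidAlgebra (ZMod 2) G)),
        (N : Set _) = perpSet (V : Set (G → Fin r → ZMod 2)) →
        (N' : Set _) = perpSet (W : Set (G → Fin s → ZMod 2)) →
        Nonempty
          (((Fin r → MonoidAlgebra (ZMod 2) G) ⧸ N) ≃ₗ[MonoidAlgebra (ZMod 2) G]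
           ((Fin s → MonoidAlgebra (ZMod 2) G) ⧸ N'))) ∧
    -- (3) every finitely generated module arises from a linear subshift
    (∀ (M : Type) [AddCommGroup M] [Module (MonoidAlgebra (ZMod 2) G) M],
      Module.Finite (MonoidAlgebra (ZMod 2) G) M →
      ∃ (r : ℕ) (V : Submodule (ZMod 2) (G → Fin r → ZMod 2))
        (N : Submodule (MonoidAlgebra (ZMod 2) G) (Fin r → MonoidAlgebra (ZMod 2) G)),
        IsClosed (V : Set (G → Fin r → ZMod 2)) ∧ InvariantSub (Fin r → ZMod 2) V ∧
        (N : Set _) = perpSet (V : Set (G → Fin r → ZMod 2)) ∧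
        Nonempty (M ≃ₗ[MonoidAlgebra (ZMod 2) G]
          ((Fin r → MonoidAlgebra (ZMod 2) G) ⧸ N))) := by
  refine ⟨?_, ?_, ?_⟩
  · intro r V _ _ N _
    exact Module.Finite.of_surjective N.mkQ (Submodule.mkQ_surjective N)
  · intro r s V W hVc hVi hWc hWi e he hes heq N N' hN hN'
    exact part2_aux V W hVc hVi hWc hWi e he hes heq N N' hN hN'
  · intro M _ _ hM
    haveI := hM
    obtain ⟨n, π, hπ⟩ := Module.Finite.exists_fin' (MonoidAlgebra (ZMod 2) G) M
    exact ⟨n, perpMod (LinearMap.ker π), LinearMap.ker π, perpMod_isClosed _,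
      perpMod_invariant _, (perpSet_perpMod _).symm,
      ⟨(π.quotKerEquivOfSurjective hπ).symm⟩⟩
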